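/- arXiv:2408.11453 — 3 statements merged into one kernel-verified Lean document; each statement's English description precedes it below -/
import Mathlib

section
/- Let n be a positive integer, X a positive real, α a real number with -1 < α < 0, and ε > 0. Then the sum over positive integers u ≤ X of (u/gcd(u,n))^α is at most C(ε,α) · X^(α+1) · n^ε for some constant C(ε,α) depending only on ε and α. -/
open Finset

lemma sum_rpow_le_aux (α : ℝ) (hα₁ : -1 < α) (hα₂ : α < 0) (M : ℕ) :
    ∑ v ∈ Finset.Icc 1 M, (v : ℝ) ^ α ≤ (M : ℝ) ^ (α + 1) / (α + 1) := by
  have hβ : 0 < α + 1 := by linarith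
  induction M with
  | zero => simp [Real.zero_rpow hβ.ne']
  | succ M ih =>
    rw [Finset.sum_Icc_succ_top (Nat.one_le_iff_ne_zero.mpr (Nat.succ_ne_zero M))]
    set N : ℝ := (M : ℝ) + 1 with hNdef
    have hN : (0:ℝ) < N := by positivity
    have hcast : ((M + 1 : ℕ) : ℝ) = N := by push_cast; ring
    rw [hcast]
    have hinv : 1/N ≤ 1 := by
      rw [div_le_one hN]; exact le_add_of_nonneg_left (Nat.cast_nonneg M)
    have h1 : (1 + (-1/N)) ^ (α+1) ≤ 1 + (α+1) * (-1/N) := by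
      apply rpow_one_add_le_one_add_mul_self
      · rw [neg_div, le_neg]; linarith
      · exact hβ.le
      · linarith
    have hMN : (M : ℝ) = N * (1 + (-1/N)) := by
      field_simp
      rw [hNdef]; ring
    have h1N : (0:ℝ) ≤ 1 + (-1/N) := by
      rw [neg_div]; have : 0 < 1/N := by positivity
      linarith
    have hA : N ^ (α+1) = N ^ α * N := by
      rw [Real.rpow_add hN, Real.rpow_one]
    have key : (M:ℝ) ^ (α+1) + (α+1) * N ^ α ≤ N ^ (α+1) := by
      have h2 : (M:ℝ) ^ (α+1) = N ^ (α+1) * (1 + (-1/N)) ^ (α+1) := by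
        rw [hMN, Real.mul_rpow hN.le h1N]
      have h3 : (M:ℝ) ^ (α+1) ≤ N ^ (α+1) * (1 + (α+1) * (-1/N)) := by
        rw [h2]
        exact mul_le_mul_of_nonneg_left h1 (Real.rpow_nonneg hN.le _)
      have h5 : N ^ (α+1) * (1 + (α+1) * (-1/N)) = N ^ (α+1) - (α+1) * N ^ α := by
        rw [hA]; field_simp; ring
      rw [h5] at h3
      linarith
    calc ∑ v ∈ Finset.Icc 1 M, (v : ℝ) ^ α + N ^ α
        ≤ (M : ℝ) ^ (α + 1) / (α + 1) + N ^ α := by linarith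
      _ = ((M:ℝ) ^ (α+1) + (α+1) * N ^ α) / (α+1) := by field_simp
      _ ≤ N ^ (α+1) / (α+1) := div_le_div_of_nonneg_right key hβ.le


lemma card_divisors_le_aux (ε : ℝ) (hε : 0 < ε) :
    ∃ C : ℝ, 0 < C ∧ ∀ n : ℕ, 0 < n → (n.divisors.card : ℝ) ≤ C * (n : ℝ) ^ ε := by
  have h2ε : (1:ℝ) < 2 ^ ε := Real.one_lt_rpow_iff_of_pos (by norm_num) |>.mpr (Or.inl ⟨by norm_num, hε⟩)
  set s : ℝ := 2 ^ ε - 1 with hsdef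
  have hs : 0 < s := by simp only [hsdef]; linarith
  set c : ℝ := max 1 (1/s) with hcdef
  have hc1 : (1:ℝ) ≤ c := le_max_left _ _
  have hcs : 1 ≤ c * s := by
    calc (1:ℝ) = (1/s) * s := by field_simp
      _ ≤ c * s := mul_le_mul_of_nonneg_right (le_max_right _ _) hs.le
  set K : ℕ := ⌊(2:ℝ) ^ (1/ε)⌋₊ + 1 with hKdef
  refine ⟨c ^ K, by positivity, fun n hn => ?_⟩
  have hn0 : n ≠ 0 := hn.ne'
  -- τ(n) as a product over prime factors
  rw [Nat.card_divisors hn0]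
  -- n as a product over prime factors
  have hfact : ∏ p ∈ n.primeFactors, (p:ℝ) ^ ((n.factorization p : ℝ) * ε)
      = (n : ℝ) ^ ε := by
    have h1 : (n : ℝ) = ∏ p ∈ n.primeFactors, ((p:ℝ) ^ (n.factorization p : ℕ)) := by
      conv_lhs => rw [← Nat.factorization_prod_pow_eq_self hn0]
      rw [Nat.prod_factorization_eq_prod_primeFactors]
      push_cast
      rfl
    rw [h1, ← Real.finset_prod_rpow _ _ (fun p _ => by positivity)]
    apply Finset.prod_congr rfl
    intro p _
    rw [← Real.rpow_natCast (p:ℝ) (n.factorization p), ← Real.rpow_mul (Nat.cast_nonneg p)]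
  -- termwise bound
  have hterm : ∀ p ∈ n.primeFactors, ((n.factorization p : ℝ) + 1)
      ≤ (if (p:ℝ) ^ ε < 2 then c else 1) * (p:ℝ) ^ ((n.factorization p : ℝ) * ε) := by
    intro p hp
    have hpp : p.Prime := Nat.prime_of_mem_primeFactors hp
    have hp2 : (2:ℝ) ≤ (p:ℝ) := by exact_mod_cast hpp.two_le
    set a : ℕ := n.factorization p with hadef
    have hrw : (p:ℝ) ^ ((a : ℝ) * ε) = ((p:ℝ) ^ ε) ^ a := by
      rw [mul_comm, Real.rpow_mul (by positivity), Real.rpow_natCast]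
    rw [hrw]
    have hpe : (2:ℝ) ^ ε ≤ (p:ℝ) ^ ε := Real.rpow_le_rpow (by norm_num) hp2 hε.le
    by_cases hsmall : (p:ℝ) ^ ε < 2
    · rw [if_pos hsmall]
      have hb : 1 + (a:ℝ) * s ≤ (1 + s) ^ a := one_add_mul_le_pow (by linarith) a
      have h1s : (1:ℝ) + s = 2 ^ ε := by rw [hsdef]; ring
      have hle : ((1:ℝ) + s) ^ a ≤ ((p:ℝ) ^ ε) ^ a := by
        apply pow_le_pow_left₀ (by linarith) (by rw [h1s]; exact hpe)
      have : ((a:ℝ) + 1) ≤ c * (1 + (a:ℝ) * s) := by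
        have h0a : (0:ℝ) ≤ a := Nat.cast_nonneg a
        nlinarith

      calc ((a:ℝ) + 1) ≤ c * (1 + (a:ℝ) * s) := this
        _ ≤ c * ((1 + s) ^ a) := by
            apply mul_le_mul_of_nonneg_left hb (by linarith)
        _ ≤ c * ((p:ℝ) ^ ε) ^ a := mul_le_mul_of_nonneg_left hle (by linarith)
    · rw [if_neg hsmall]
      push_neg at hsmall
      have h2a : ((a:ℝ) + 1) ≤ (2:ℝ) ^ a := by
        have := Nat.lt_two_pow_self (n := a)
        exact_mod_cast Nat.succ_le_of_lt this

      rw [one_mul]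
      calc ((a:ℝ) + 1) ≤ (2:ℝ) ^ a := h2a
        _ ≤ ((p:ℝ) ^ ε) ^ a := pow_le_pow_left₀ (by norm_num) hsmall a
  -- combine
  push_cast
  calc ∏ p ∈ n.primeFactors, ((n.factorization p : ℝ) + 1)
      ≤ ∏ p ∈ n.primeFactors,
          ((if (p:ℝ) ^ ε < 2 then c else 1) * (p:ℝ) ^ ((n.factorization p : ℝ) * ε)) := by
        apply Finset.prod_le_prod (fun p _ => by positivity) hterm
    _ = (∏ p ∈ n.primeFactors, (if (p:ℝ) ^ ε < 2 then c else 1))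
        * ∏ p ∈ n.primeFactors, (p:ℝ) ^ ((n.factorization p : ℝ) * ε) := by
        rw [Finset.prod_mul_distrib]
    _ ≤ c ^ K * (n:ℝ) ^ ε := by
        rw [hfact]
        apply mul_le_mul_of_nonneg_right _ (Real.rpow_nonneg (Nat.cast_nonneg n) ε)
        rw [Finset.prod_ite, Finset.prod_const, Finset.prod_const_one, mul_one]
        have hsub : n.primeFactors.filter (fun (p : ℕ) => (p:ℝ) ^ ε < 2) ⊆ Finset.range K := by
          intro p hp
          rw [Finset.mem_filter] at hp
          rw [Finset.mem_range, hKdef, Nat.lt_succ_iff, Nat.le_floor_iff (by positivity)]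
          have hp0 : (0:ℝ) ≤ (p:ℝ) := Nat.cast_nonneg p
          have : ((p:ℝ) ^ ε) ^ (1/ε) ≤ (2:ℝ) ^ (1/ε) :=
            Real.rpow_le_rpow (by positivity) hp.2.le (by positivity)
          rwa [← Real.rpow_mul hp0, mul_one_div_cancel hε.ne', Real.rpow_one] at this
        calc c ^ (n.primeFactors.filter (fun (p : ℕ) => (p:ℝ) ^ ε < 2)).card
            ≤ c ^ K := by
              apply pow_le_pow_right₀ hc1
              calc _ ≤ (Finset.range K).card := Finset.card_le_card hsub
                _ = K := Finset.card_range K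

theorem gcd_sum_bound (α ε : ℝ) (hα₁ : -1 < α) (hα₂ : α < 0) (hε : 0 < ε) :
    ∃ C : ℝ, 0 < C ∧ ∀ (n : ℕ) (X : ℝ), 0 < n → 0 < X →
      ∑ u ∈ Finset.Icc 1 ⌊X⌋₊, ((u / Nat.gcd u n : ℕ) : ℝ) ^ α
        ≤ C * X ^ (α + 1) * (n : ℝ) ^ ε := by
  obtain ⟨Cd, hCd, hdiv⟩ := card_divisors_le_aux ε hε
  have hβ : 0 < α + 1 := by linarith
  refine ⟨Cd / (α + 1), by positivity, fun n X hn hX => ?_⟩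
  set N := ⌊X⌋₊ with hNdef
  have hmap : ∀ u ∈ Finset.Icc 1 N, Nat.gcd u n ∈ n.divisors :=
    fun u _ => Nat.mem_divisors.mpr ⟨Nat.gcd_dvd_right u n, hn.ne'⟩
  rw [← Finset.sum_fiberwise_of_maps_to hmap]
  have hNX : (N : ℝ) ≤ X := Nat.floor_le hX.le
  have hfiber : ∀ d ∈ n.divisors,
      ∑ u ∈ (Finset.Icc 1 N).filter (fun u => Nat.gcd u n = d),
          ((u / Nat.gcd u n : ℕ) : ℝ) ^ α ≤ X ^ (α + 1) / (α + 1) := by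
    intro d hd
    have hd0 : 0 < d := Nat.pos_of_mem_divisors hd
    have hdvd : ∀ u ∈ (Finset.Icc 1 N).filter (fun u => Nat.gcd u n = d), d ∣ u := by
      intro u hu
      rw [Finset.mem_filter] at hu
      rw [← hu.2]
      exact Nat.gcd_dvd_left u n
    calc ∑ u ∈ (Finset.Icc 1 N).filter (fun u => Nat.gcd u n = d),
            ((u / Nat.gcd u n : ℕ) : ℝ) ^ α
        = ∑ u ∈ (Finset.Icc 1 N).filter (fun u => Nat.gcd u n = d),
            ((u / d : ℕ) : ℝ) ^ α := by
          apply Finset.sum_congr rfl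
          intro u hu
          rw [Finset.mem_filter] at hu
          rw [hu.2]
      _ = ∑ v ∈ ((Finset.Icc 1 N).filter (fun u => Nat.gcd u n = d)).image (· / d),
            ((v : ℕ) : ℝ) ^ α := by
          rw [Finset.sum_image]
          intro u1 h1 u2 h2 heq
          have e1 : u1 = d * (u1 / d) := (Nat.mul_div_cancel' (hdvd u1 h1)).symm
          have e2 : u2 = d * (u2 / d) := (Nat.mul_div_cancel' (hdvd u2 h2)).symm
          rw [e1, e2, show u1 / d = u2 / d from heq]
      _ ≤ ∑ v ∈ Finset.Icc 1 (N / d), ((v : ℕ) : ℝ) ^ α := by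
          apply Finset.sum_le_sum_of_subset_of_nonneg
          · intro v hv
            rw [Finset.mem_image] at hv
            obtain ⟨u, hu, huv⟩ := hv
            have hdu := hdvd u hu
            rw [Finset.mem_filter, Finset.mem_Icc] at hu
            rw [Finset.mem_Icc, ← huv]
            constructor
            · rw [Nat.one_le_div_iff hd0]
              exact Nat.le_of_dvd (lt_of_lt_of_le Nat.one_pos hu.1.1) hdu
            · exact Nat.div_le_div_right hu.1.2
          · intro v _ _
            positivity
      _ ≤ ((N / d : ℕ) : ℝ) ^ (α + 1) / (α + 1) := sum_rpow_le_aux α hα₁ hα₂ (N / d)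
      _ ≤ X ^ (α + 1) / (α + 1) := by
          apply div_le_div_of_nonneg_right _ hβ.le
          apply Real.rpow_le_rpow (Nat.cast_nonneg _) _ hβ.le
          calc ((N / d : ℕ) : ℝ) ≤ (N : ℝ) := by exact_mod_cast Nat.div_le_self N d
            _ ≤ X := hNX
  calc ∑ d ∈ n.divisors, ∑ u ∈ (Finset.Icc 1 N).filter (fun u => Nat.gcd u n = d),
          ((u / Nat.gcd u n : ℕ) : ℝ) ^ α
      ≤ ∑ _d ∈ n.divisors, X ^ (α + 1) / (α + 1) := Finset.sum_le_sum hfiber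
    _ = (n.divisors.card : ℝ) * (X ^ (α + 1) / (α + 1)) := by
        rw [Finset.sum_const, nsmul_eq_mul]
    _ ≤ (Cd * (n : ℝ) ^ ε) * (X ^ (α + 1) / (α + 1)) := by
        apply mul_le_mul_of_nonneg_right (hdiv n hn)
        positivity
    _ = Cd / (α + 1) * X ^ (α + 1) * (n : ℝ) ^ ε := by
        field_simp
end

section
/- Let K be an algebraically closed field of characteristic zero, b ∈ K nonzero, let l₁,…,l_r be positive integers and γ₁,…,γ_r ∈ K[t] polynomials with ∑_{i=1}^r γᵢ^{lᵢ} = b. Set dᵢ = deg γᵢ. If γ₁^{l₁},…,γ_r^{l_r} are linearly independent over K, then max_{1≤i≤r} dᵢlᵢ ≤ (r−1)(d₁ + ⋯ + d_r) − r(r−1)/2. -/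
open Polynomial

private lemma pair_dep {K : Type*} [Field K] [CharZero K] {u v : K[X]} (hu : u ≠ 0)
    (h : u * derivative v = derivative u * v) :
    ∃ α β : K, β ≠ 0 ∧ C β * v = C α * u := by
  classical
  by_cases hv : v = 0
  · exact ⟨0, 1, one_ne_zero, by simp [hv]⟩
  set g := GCDMonoid.gcd u v with hg
  have hgdvdu : g ∣ u := gcd_dvd_left u v
  have hgdvdv : g ∣ v := gcd_dvd_right u v
  have hgne : g ≠ 0 := gcd_ne_zero_of_left hu
  set u₀ := u / g with hu₀
  set v₀ := v / g with hv₀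
  have hueq : u = g * u₀ := (EuclideanDomain.mul_div_cancel' hgne hgdvdu).symm
  have hveq : v = g * v₀ := (EuclideanDomain.mul_div_cancel' hgne hgdvdv).symm
  have hco : IsCoprime u₀ v₀ := isCoprime_div_gcd_div_gcd hv
  have hu₀ne : u₀ ≠ 0 := fun h0 => hu (by rw [hueq, h0, mul_zero])
  have hv₀ne : v₀ ≠ 0 := fun h0 => hv (by rw [hveq, h0, mul_zero])
  have key : u₀ * derivative v₀ = derivative u₀ * v₀ := by
    have h2 : g * g * (u₀ * derivative v₀) = g * g * (derivative u₀ * v₀) := by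
      have h' := h
      rw [hueq, hveq, derivative_mul, derivative_mul] at h'
      linear_combination h'
    exact mul_left_cancel₀ (mul_ne_zero hgne hgne) h2
  -- u₀ has zero derivative
  have deriv_zero : ∀ w₀ w₁ : K[X], w₀ ≠ 0 → IsCoprime w₀ w₁ →
      w₀ * derivative w₁ = derivative w₀ * w₁ → derivative w₀ = 0 := by
    intro w₀ w₁ hw₀ hcop heq
    have hdvd : w₀ ∣ derivative w₀ * w₁ := ⟨derivative w₁, heq.symm⟩
    have hdvd' : w₀ ∣ derivative w₀ := hcop.dvd_of_dvd_mul_right hdvd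
    by_contra hne
    exact absurd (degree_le_of_dvd hdvd' hne) (not_le.mpr (degree_derivative_lt hw₀))
  have hu₀' : derivative u₀ = 0 := deriv_zero u₀ v₀ hu₀ne hco key
  have hv₀' : derivative v₀ = 0 := by
    refine deriv_zero v₀ u₀ hv₀ne hco.symm ?_
    linear_combination -key
  obtain ⟨α, hα⟩ : ∃ α : K, u₀ = C α := ⟨u₀.coeff 0, eq_C_of_natDegree_eq_zero
    (natDegree_eq_zero_of_derivative_eq_zero hu₀')⟩
  obtain ⟨β, hβ⟩ : ∃ β : K, v₀ = C β := ⟨v₀.coeff 0, eq_C_of_natDegree_eq_zero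
    (natDegree_eq_zero_of_derivative_eq_zero hv₀')⟩
  have hαne : α ≠ 0 := fun h0 => hu₀ne (by rw [hα, h0, map_zero])
  refine ⟨β, α, hαne, ?_⟩
  rw [hueq, hveq, hα, hβ]; ring

private lemma pow_dvd_derivative {K : Type*} [CommRing K] {γ h : K[X]} {n : ℕ}
    (hd : γ ^ n ∣ h) : γ ^ (n - 1) ∣ derivative h := by
  obtain ⟨u, rfl⟩ := hd
  rw [derivative_mul, derivative_pow]
  refine dvd_add ?_ (Dvd.dvd.mul_right (pow_dvd_pow _ (Nat.sub_le _ _)) _)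
  exact ((dvd_mul_left _ _).mul_right _).mul_right _

private lemma pow_dvd_iterate_derivative {K : Type*} [CommRing K] (γ : K[X]) (n a : ℕ) :
    γ ^ (n - a) ∣ derivative^[a] (γ ^ n) := by
  induction a with
  | zero => simp
  | succ a ih =>
    rw [Function.iterate_succ_apply']
    have : n - (a + 1) = n - a - 1 := by omega
    rw [this]
    exact pow_dvd_derivative ih

private lemma wdet_ne_zero {K : Type*} [Field K] [CharZero K] :
    ∀ (n : ℕ) (f : Fin n → K[X]), LinearIndependent K f →
      (Matrix.of fun j a : Fin n => derivative^[(a : ℕ)] (f j)).det ≠ 0 := by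
  intro n
  induction n with
  | zero => intro f _; simp [Matrix.det_isEmpty]
  | succ n ih =>
    intro f hind hdet
    obtain ⟨c, hc0, hcM⟩ := (Matrix.exists_vecMul_eq_zero_iff).mpr hdet
    -- relations for all a < n+1
    have hrelN : ∀ a : ℕ, a < n + 1 → ∑ j, c j * derivative^[a] (f j) = 0 := by
      intro a ha
      have := congrFun hcM ⟨a, ha⟩
      simpa [Matrix.vecMul, dotProduct] using this
    -- derived relations for a < n
    have hrel' : ∀ a : ℕ, a < n → ∑ j, derivative (c j) * derivative^[a] (f j) = 0 := by
      intro a ha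
      have h1 := congrArg derivative (hrelN a (by omega))
      rw [derivative_sum, derivative_zero] at h1
      have h2 : ∑ j, (derivative (c j) * derivative^[a] (f j)
          + c j * derivative^[a + 1] (f j)) = 0 := by
        rw [← h1]
        refine Finset.sum_congr rfl fun j _ => ?_
        rw [derivative_mul, Function.iterate_succ_apply']
      rw [Finset.sum_add_distrib, hrelN (a + 1) (by omega), add_zero] at h2
      exact h2
    obtain ⟨k, hk⟩ : ∃ k, c k ≠ 0 := Function.ne_iff.mp hc0
    by_cases hwz : ∀ j, c k * derivative (c j) - derivative (c k) * c j = 0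
    · -- all pairwise Wronskians vanish: get a K-linear relation
      have hpair : ∀ j, ∃ α β : K, β ≠ 0 ∧ C β * c j = C α * c k := fun j =>
        pair_dep hk (sub_eq_zero.mp (hwz j))
      choose α β hβ hαβ using hpair
      set lam : Fin (n + 1) → K := fun j => α j * ∏ m ∈ Finset.univ.erase j, β m with hlam
      have hrel0 : ∑ j, lam j • f j = 0 := by
        have hmul : c k * ∑ j, C (lam j) * f j = C (∏ m, β m) * ∑ j, c j * f j := by
          rw [Finset.mul_sum, Finset.mul_sum]
          refine Finset.sum_congr rfl fun j _ => ?_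
          have : C (lam j) * c k = C (∏ m, β m) * c j := by
            rw [hlam]
            rw [map_mul]
            calc C (α j) * C (∏ m ∈ Finset.univ.erase j, β m) * c k
                = C (∏ m ∈ Finset.univ.erase j, β m) * (C (α j) * c k) := by ring
              _ = C (∏ m ∈ Finset.univ.erase j, β m) * (C (β j) * c j) := by rw [hαβ j]
              _ = C (∏ m ∈ Finset.univ.erase j, β m) * C (β j) * c j := by ring
              _ = C (∏ m, β m) * c j := by
                  rw [← map_mul, Finset.prod_erase_mul _ _ (Finset.mem_univ j)]
          calc c k * (C (lam j) * f j) = (C (lam j) * c k) * f j := by ring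
            _ = (C (∏ m, β m) * c j) * f j := by rw [this]
            _ = C (∏ m, β m) * (c j * f j) := by ring
        have h00 := hrelN 0 (by omega)
        simp only [Function.iterate_zero_apply] at h00
        rw [h00, mul_zero] at hmul
        have hsum0 : ∑ j, C (lam j) * f j = 0 :=
          (mul_eq_zero.mp hmul).resolve_left hk
        simpa [smul_eq_C_mul] using hsum0
      have hlamk : lam k ≠ 0 := by
        have hαk : α k = β k := by
          have := hαβ k
          have h2 : C (β k - α k) * c k = 0 := by
            rw [map_sub]; linear_combination this
          rcases mul_eq_zero.mp h2 with h3 | h3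
          · have h4 : β k - α k = 0 := by exact_mod_cast (C_eq_zero).mp h3
            exact (sub_eq_zero.mp h4).symm
          · exact absurd h3 hk
        exact mul_ne_zero (hαk ▸ hβ k) (Finset.prod_ne_zero_iff.mpr fun m _ => hβ m)
      exact hlamk ((Fintype.linearIndependent_iff.mp hind) lam hrel0 k)
    · -- some Wronskian nonzero: reduce to n
      push_neg at hwz
      obtain ⟨j₀, hj₀⟩ := hwz
      set v : Fin (n + 1) → K[X] :=
        fun j => c k * derivative (c j) - derivative (c k) * c j with hv
      have hvk : v k = 0 := by simp [hv, mul_comm]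
      have hvrel : ∀ a : ℕ, a < n → ∑ j, v j * derivative^[a] (f j) = 0 := by
        intro a ha
        have : ∑ j, v j * derivative^[a] (f j)
            = c k * ∑ j, derivative (c j) * derivative^[a] (f j)
              - derivative (c k) * ∑ j, c j * derivative^[a] (f j) := by
          rw [Finset.mul_sum, Finset.mul_sum, ← Finset.sum_sub_distrib]
          refine Finset.sum_congr rfl fun j _ => by rw [hv]; ring
        rw [this, hrel' a ha, hrelN a (by omega), mul_zero, mul_zero, sub_zero]
      have hj₀k : j₀ ≠ k := fun h => hj₀ (by rw [h]; exact hvk)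
      obtain ⟨j₁, hj₁⟩ := Fin.exists_succAbove_eq hj₀k
      have hind' : LinearIndependent K (f ∘ k.succAbove) :=
        hind.comp _ (Fin.succAbove_right_injective)
      refine ih (f ∘ k.succAbove) hind' ?_
      rw [← Matrix.exists_vecMul_eq_zero_iff]
      refine ⟨v ∘ k.succAbove, ?_, ?_⟩
      · intro h0
        exact hj₀ (by rw [← hj₁]; exact congrFun h0 j₁)
      · funext a
        have := hvrel (a : ℕ) a.isLt
        rw [Fin.sum_univ_succAbove _ k, hvk, zero_mul, zero_add] at this
        simpa [Matrix.vecMul, dotProduct] using this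

theorem wronskian_degree_bound
    {K : Type*} [Field K] [IsAlgClosed K] [CharZero K]
    (r : ℕ) (hr : 0 < r)
    (b : K) (hb : b ≠ 0)
    (l : Fin r → ℕ) (hl : ∀ i, 0 < l i)
    (γ : Fin r → K[X])
    (hsum : ∑ i, γ i ^ l i = C b)
    (hind : LinearIndependent K (fun i => γ i ^ l i)) :
    ∀ i, ((γ i).natDegree * l i : ℤ) ≤
      (r - 1 : ℤ) * (∑ j, ((γ j).natDegree : ℤ)) - (r * (r - 1) : ℤ) / 2 := by
  obtain ⟨m, rfl⟩ : ∃ m, r = m + 1 := ⟨r - 1, by omega⟩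
  intro i
  classical
  set f : Fin (m + 1) → K[X] := fun j => γ j ^ l j with hf
  set M : Matrix (Fin (m + 1)) (Fin (m + 1)) K[X] :=
    Matrix.of (fun j a : Fin (m + 1) => derivative^[(a : ℕ)] (f j)) with hMdef
  have hW : M.det ≠ 0 := wdet_ne_zero (m + 1) f hind
  have hγ : ∀ j, γ j ≠ 0 := fun j h0 =>
    hind.ne_zero j (by show γ j ^ l j = 0; rw [h0]; exact zero_pow (hl j).ne')
  set d : Fin (m + 1) → ℕ := fun j => (γ j).natDegree with hd
  have hnn : ∀ j, (f j).natDegree = l j * d j := fun j => natDegree_pow _ _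
  -- (A) lower bound on the degree of the Wronskian
  have hPdvd : (∏ j, γ j ^ (l j - m)) ∣ M.det := by
    rw [Matrix.det_apply']
    refine Finset.dvd_sum fun σ _ => ?_
    refine Dvd.dvd.mul_left ?_ _
    have hre : (∏ j, γ j ^ (l j - m)) = ∏ y : Fin (m + 1), γ (σ y) ^ (l (σ y) - m) :=
      (Equiv.prod_comp σ _).symm
    rw [hre]
    refine Finset.prod_dvd_prod_of_dvd _ _ fun y _ => ?_
    have hym : (y : ℕ) ≤ m := Fin.is_le y
    exact dvd_trans (pow_dvd_pow _ (by omega))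
      (pow_dvd_iterate_derivative (γ (σ y)) (l (σ y)) (y : ℕ))
  have hPne : (∏ j, γ j ^ (l j - m)) ≠ 0 :=
    Finset.prod_ne_zero_iff.mpr fun j _ => pow_ne_zero _ (hγ j)
  have hlow : ∑ j, (l j - m) * d j ≤ M.det.natDegree := by
    have h1 := Polynomial.natDegree_le_of_dvd hPdvd hW
    have h2 : (∏ j, γ j ^ (l j - m)).natDegree = ∑ j, (l j - m) * d j := by
      rw [Polynomial.natDegree_prod _ _ fun j _ => pow_ne_zero _ (hγ j)]
      exact Finset.sum_congr rfl fun j _ => natDegree_pow _ _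
    omega
  -- (B) replace row i by the constant row
  set rowb : Fin (m + 1) → K[X] := fun a => if (a : ℕ) = 0 then C b else 0 with hrowb
  have hdetN : (M.updateRow i rowb).det = M.det := by
    have h1 : rowb = ∑ k, (fun _ : Fin (m + 1) => (1 : K[X])) k • M k := by
      funext a
      have hs2 : (∑ k, (fun _ : Fin (m + 1) => (1 : K[X])) k • M k) a
          = ∑ k, derivative^[(a : ℕ)] (f k) := by
        rw [Finset.sum_apply]
        simp [Finset.sum_apply, hMdef]
      rw [hrowb, hs2, ← iterate_derivative_sum, hsum]
      beta_reduce
      by_cases ha : (a : ℕ) = 0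
      · rw [if_pos ha, ha]
        simp
      · rw [if_neg ha]
        exact (iterate_derivative_eq_zero (by rw [natDegree_C]; omega)).symm
    rw [h1, Matrix.det_updateRow_sum]
    simp
  set N := M.updateRow i rowb with hN
  have hNdet : N.det ≠ 0 := by rw [hN, hdetN]; exact hW
  set s : ℕ := ∑ y : Fin (m + 1), (y : ℕ) with hs
  set Q : ℕ := ∑ j ∈ Finset.univ.erase i, (f j).natDegree with hQ
  -- key per-permutation analysis
  have hkey : ∀ σ : Equiv.Perm (Fin (m + 1)),
      (((Equiv.Perm.sign σ : ℤ) : K[X]) * ∏ y, N (σ y) y) ≠ 0 →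
      (((Equiv.Perm.sign σ : ℤ) : K[X]) * ∏ y, N (σ y) y).natDegree + s ≤ Q := by
    intro σ h0
    have hprod : (∏ y, N (σ y) y) ≠ 0 := fun h => h0 (by rw [h, mul_zero])
    have hfac : ∀ y : Fin (m + 1), N (σ y) y ≠ 0 := fun y =>
      Finset.prod_ne_zero_iff.mp hprod y (Finset.mem_univ y)
    -- σ 0 = i
    have hσ0 : σ 0 = i := by
      have h1 := hfac (σ.symm i)
      rw [Equiv.apply_symm_apply, hN, Matrix.updateRow_self] at h1
      have h2 : ((σ.symm i : Fin (m + 1)) : ℕ) = 0 := by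
        by_contra h3
        rw [hrowb] at h1
        simp only [h3, if_false] at h1
        exact h1 rfl
      have h4 : σ.symm i = 0 := Fin.ext h2
      rw [← h4, Equiv.apply_symm_apply]
    have hne : ∀ y : Fin (m + 1), y ≠ 0 → σ y ≠ i := fun y hy h =>
      hy (σ.injective (h.trans hσ0.symm))
    have hfacM : ∀ y : Fin (m + 1), y ≠ 0 →
        N (σ y) y = derivative^[(y : ℕ)] (f (σ y)) := by
      intro y hy
      rw [hN, Matrix.updateRow_ne (hne y hy)]
      rfl
    have hyle : ∀ y : Fin (m + 1), y ≠ 0 → (y : ℕ) ≤ (f (σ y)).natDegree := by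
      intro y hy
      by_contra h3
      exact hfac y (by rw [hfacM y hy]; exact iterate_derivative_eq_zero (by omega))
    -- degree bound for the product
    have hdeg1 : (((Equiv.Perm.sign σ : ℤ) : K[X]) * ∏ y, N (σ y) y).natDegree
        ≤ ∑ y, (N (σ y) y).natDegree := by
      refine le_trans (natDegree_mul_le) ?_
      rw [natDegree_intCast, zero_add]
      exact natDegree_prod_le _ _
    have hsplit : ∑ y, (N (σ y) y).natDegree
        = (N (σ 0) 0).natDegree + ∑ y ∈ Finset.univ.erase 0, (N (σ y) y).natDegree :=
      (Finset.add_sum_erase _ _ (Finset.mem_univ 0)).symm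
    have hdeg0 : (N (σ 0) 0).natDegree = 0 := by
      rw [hσ0, hN, Matrix.updateRow_self, hrowb]
      simp
    have hdegy : ∀ y ∈ Finset.univ.erase 0,
        (N (σ y) y).natDegree ≤ (f (σ y)).natDegree - (y : ℕ) := by
      intro y hy
      rw [hfacM y (Finset.ne_of_mem_erase hy)]
      exact natDegree_iterate_derivative _ _
    -- reindex sums over erase 0 to erase i
    have hreind : ∑ y ∈ Finset.univ.erase 0, (f (σ y)).natDegree = Q := by
      rw [hQ]
      refine Finset.sum_bij (fun y _ => σ y) ?_ ?_ ?_ ?_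
      · intro y hy
        exact Finset.mem_erase.mpr ⟨hne y (Finset.ne_of_mem_erase hy), Finset.mem_univ _⟩
      · intro y1 h1 y2 h2 h
        exact σ.injective h
      · intro j hj
        refine ⟨σ.symm j, ?_, Equiv.apply_symm_apply σ j⟩
        refine Finset.mem_erase.mpr ⟨?_, Finset.mem_univ _⟩
        intro h
        have : σ 0 = j := by rw [← h, Equiv.apply_symm_apply]
        exact Finset.ne_of_mem_erase hj (by rw [← this, hσ0])
      · intro y hy; rfl
    have hserase : ∑ y ∈ Finset.univ.erase (0 : Fin (m + 1)), (y : ℕ) = s := by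
      rw [hs]
      have := Finset.add_sum_erase Finset.univ (fun y : Fin (m + 1) => (y : ℕ))
        (Finset.mem_univ 0)
      simpa using this
    have hsum2 : ∑ y ∈ Finset.univ.erase 0, ((f (σ y)).natDegree - (y : ℕ)) + s = Q := by
      rw [← hserase, ← hreind, ← Finset.sum_add_distrib]
      exact Finset.sum_congr rfl fun y hy =>
        Nat.sub_add_cancel (hyle y (Finset.ne_of_mem_erase hy))
    have hfin : ∑ y ∈ Finset.univ.erase 0, (N (σ y) y).natDegree
        ≤ ∑ y ∈ Finset.univ.erase 0, ((f (σ y)).natDegree - (y : ℕ)) :=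
      Finset.sum_le_sum hdegy
    omega
  -- upper bound for the determinant degree
  have hup : N.det.natDegree ≤ Q - s := by
    rw [Matrix.det_apply']
    refine natDegree_sum_le_of_forall_le _ _ fun σ _ => ?_
    by_cases h0 : (((Equiv.Perm.sign σ : ℤ) : K[X]) * ∏ y, N (σ y) y) = 0
    · rw [h0, natDegree_zero]; omega
    · have := hkey σ h0
      omega
  have hsQ : s ≤ Q := by
    have h1 : N.det = ∑ σ : Equiv.Perm (Fin (m + 1)),
        ((Equiv.Perm.sign σ : ℤ) : K[X]) * ∏ y, N (σ y) y := Matrix.det_apply' N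
    obtain ⟨σ, _, hσ⟩ := Finset.exists_ne_zero_of_sum_ne_zero (h1 ▸ hNdet)
    have := hkey σ hσ
    omega
  have hMup : M.det.natDegree + s ≤ Q := by
    rw [← hdetN] at hlow ⊢
    omega
  -- final arithmetic
  have hQT : Q + (f i).natDegree = ∑ j, (f j).natDegree := by
    rw [hQ, add_comm]
    exact Finset.add_sum_erase Finset.univ (fun j => (f j).natDegree) (Finset.mem_univ i)
  have h2s : 2 * s = (m + 1) * m := by
    rw [hs, Fin.sum_univ_eq_sum_range (fun y => y) (m + 1)]
    have := Finset.sum_range_id_mul_two (m + 1)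
    simp only [Nat.add_sub_cancel] at this
    omega
  -- cast to ℤ
  have hcast1 : ((∑ j, (l j - m) * d j : ℕ) : ℤ)
      ≥ (∑ j, ((l j : ℤ) * d j) ) - (m : ℤ) * ∑ j, (d j : ℤ) := by
    push_cast
    rw [Finset.mul_sum, ← Finset.sum_sub_distrib]
    refine Finset.sum_le_sum fun j _ => ?_
    have h1 : (l j : ℤ) - (m : ℤ) ≤ ((l j - m : ℕ) : ℤ) := by omega
    have h2 : (0 : ℤ) ≤ (d j : ℤ) := Int.natCast_nonneg _
    nlinarith [mul_le_mul_of_nonneg_right h1 h2]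
  have hT : ((∑ j, (f j).natDegree : ℕ) : ℤ) = ∑ j, ((l j : ℤ) * d j) := by
    push_cast
    exact Finset.sum_congr rfl fun j _ => by exact_mod_cast congrArg Nat.cast (hnn j)
  have hni : ((f i).natDegree : ℤ) = (l i : ℤ) * d i := by exact_mod_cast hnn i
  have hlow' : ((∑ j, (l j - m) * d j : ℕ) : ℤ) ≤ (M.det.natDegree : ℤ) := by
    exact_mod_cast hlow
  have hMup' : (M.det.natDegree : ℤ) + s ≤ Q := by exact_mod_cast hMup
  have hQT' : (Q : ℤ) + ((f i).natDegree : ℤ) = ((∑ j, (f j).natDegree : ℕ) : ℤ) := by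
    exact_mod_cast hQT
  -- conclude
  have hmain : (l i : ℤ) * d i + s ≤ (m : ℤ) * ∑ j, (d j : ℤ) := by
    rw [← hni]
    linarith [hcast1, hlow', hMup', hQT', hT]
  have hdiv : ((m + 1 : ℕ) : ℤ) * (((m + 1 : ℕ) : ℤ) - 1) / 2 = (s : ℤ) := by
    have : ((m + 1 : ℕ) : ℤ) * (((m + 1 : ℕ) : ℤ) - 1) = 2 * (s : ℤ) := by
      push_cast
      have := h2s
      push_cast at this
      linarith
    rw [this]
    exact Int.mul_ediv_cancel_left _ two_ne_zero
  have hgoal : ((γ i).natDegree * l i : ℤ) = (l i : ℤ) * d i := by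
    show ((γ i).natDegree * l i : ℤ) = (l i : ℤ) * ((γ i).natDegree : ℤ)
    push_cast
    ring
  have hm1 : ((m + 1 : ℕ) : ℤ) - 1 = (m : ℤ) := by push_cast; ring
  have hdd : ∑ j, (((γ j).natDegree : ℤ)) = ∑ j, (d j : ℤ) := rfl
  rw [hgoal, hdiv, hm1, hdd]
  linarith [hmain]
end

section
/- Let K be an algebraically closed field of characteristic zero and γ₂, γ₃ ∈ K[t] with l, m integers satisfying l > m ≥ 2, deg γ₂ ≤ 2, deg γ₃ ≤ 2, at least one of γ₂, γ₃ nonconstant, and γ₂^l, γ₃^m linearly independent over K. Then there is no b ∈ K \ {0} with γ₂(t)^l + γ₃(t)^m = b. -/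
open Polynomial

theorem no_constant_sum_two_powers
    {K : Type*} [Field K] [IsAlgClosed K] [CharZero K]
    (l m : ℕ) (hm : 2 ≤ m) (hlm : m < l)
    (γ₂ γ₃ : K[X]) (hd₂ : γ₂.natDegree ≤ 2) (hd₃ : γ₃.natDegree ≤ 2)
    (hnc : 0 < γ₂.natDegree ∨ 0 < γ₃.natDegree)
    (hind : LinearIndependent K ![γ₂ ^ l, γ₃ ^ m]) :
    ¬ ∃ b : K, b ≠ 0 ∧ γ₂ ^ l + γ₃ ^ m = C b := by
  rintro ⟨b, hb, heq⟩
  have h2l : γ₂ ^ l ≠ 0 := by have := hind.ne_zero 0; simpa using this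
  have h3m : γ₃ ^ m ≠ 0 := by have := hind.ne_zero 1; simpa using this
  have h2 : γ₂ ≠ 0 := fun h => h2l (by simp [h, pow_eq_zero_iff (by omega : l ≠ 0)])
  have h3 : γ₃ ≠ 0 := fun h => h3m (by simp [h, pow_eq_zero_iff (by omega : m ≠ 0)])
  have hcop : IsCoprime γ₂ γ₃ := by
    have hcp : IsCoprime (γ₂ ^ l) (γ₃ ^ m) := by
      refine ⟨C b⁻¹, C b⁻¹, ?_⟩
      rw [← mul_add, heq, ← C_mul, inv_mul_cancel₀ hb, C_1]
    exact (IsCoprime.pow_left_iff (by omega)).mp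
      ((IsCoprime.pow_right_iff (by omega)).mp hcp)
  have hder : derivative (γ₂ ^ l) + derivative (γ₃ ^ m) = 0 := by
    rw [← derivative_add, heq, derivative_C]
  rw [derivative_pow, derivative_pow] at hder
  have hL : (l : K) ≠ 0 := Nat.cast_ne_zero.mpr (by omega)
  have hM : (m : K) ≠ 0 := Nat.cast_ne_zero.mpr (by omega)
  by_cases hd3' : derivative γ₃ = 0
  · have h0 : C (l : K) * γ₂ ^ (l - 1) * derivative γ₂ = 0 := by
      rw [hd3', mul_zero, add_zero] at hder; exact hder
    have hd2' : derivative γ₂ = 0 := by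
      rcases mul_eq_zero.mp h0 with h | h
      · exact ((mul_ne_zero (by simpa using hL) (pow_ne_zero _ h2)) h).elim
      · exact h
    rcases hnc with h | h
    · exact absurd (natDegree_eq_zero_of_derivative_eq_zero hd2') (by omega)
    · exact absurd (natDegree_eq_zero_of_derivative_eq_zero hd3') (by omega)
  · have hdvd : γ₂ ^ (l - 1) ∣ (C (m : K) * γ₃ ^ (m - 1)) * derivative γ₃ := by
      have h : (C (m : K) * γ₃ ^ (m - 1)) * derivative γ₃
          = -(C (l : K) * γ₂ ^ (l - 1) * derivative γ₂) := by linear_combination hder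
      rw [h]
      exact (Dvd.dvd.neg_right ⟨C (l : K) * derivative γ₂, by ring⟩)
    have hcm : IsCoprime (γ₂ ^ (l - 1)) (C (m : K)) :=
      ⟨0, C (m : K)⁻¹, by rw [← C_mul, inv_mul_cancel₀ hM]; simp⟩
    have hc3 : IsCoprime (γ₂ ^ (l - 1)) (γ₃ ^ (m - 1)) := hcop.pow
    have hdvd2 : γ₂ ^ (l - 1) ∣ derivative γ₃ :=
      (hcm.mul_right hc3).dvd_of_dvd_mul_left hdvd
    have hdeg : (l - 1) * γ₂.natDegree ≤ 1 := by
      have h1 : (γ₂ ^ (l - 1)).natDegree ≤ (derivative γ₃).natDegree :=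
        natDegree_le_of_dvd hdvd2 hd3'
      rw [natDegree_pow] at h1
      have h2 : (derivative γ₃).natDegree ≤ γ₃.natDegree - 1 := natDegree_derivative_le γ₃
      omega
    have hd20 : γ₂.natDegree = 0 := by
      have : 2 ≤ l - 1 := by omega
      nlinarith
    have hd2' : derivative γ₂ = 0 := by
      rw [eq_C_of_natDegree_eq_zero hd20, derivative_C]
    have h0 : C (m : K) * γ₃ ^ (m - 1) * derivative γ₃ = 0 := by
      rw [hd2', mul_zero, zero_add] at hder; exact hder
    rcases mul_eq_zero.mp h0 with h | h
    · exact (mul_ne_zero (by simpa using hM) (pow_ne_zero _ h3)) h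
    · exact hd3' h
end
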